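/- Let r ≥ 2 and n ≥ r, and let G' be a graph on n vertices that is K_{r+1}-free and has the largest r-clique spectral radius among all K_{r+1}-free graphs on n vertices (i.e., ρ_r(G') ≥ ρ_r(H) for every K_{r+1}-free graph H on n vertices). Then G' is r-clique connected. -/

import Mathlib

open Finset

/-- The finset of all `r`-cliques (sets of `r` pairwise adjacent vertices) of `G`. -/
noncomputable def rCliques {V : Type*} [Fintype V] [DecidableEq V]
    (G : SimpleGraph V) (r : ℕ) : Finset (Finset V) :=
  letI := Classical.decPred (fun K : Finset V => G.IsNClique r K)
  Finset.univ.filter (fun K => G.IsNClique r K)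

/-- The `r`-clique spectral radius of `G`: the supremum over nonnegative vectors `x`
with `∑ v, x v ^ r = 1` of `r * ∑_{K an r-clique} ∏_{i ∈ K} x i`. -/
noncomputable def cliqueSpecRad {V : Type*} [Fintype V] [DecidableEq V]
    (G : SimpleGraph V) (r : ℕ) : ℝ :=
  sSup { y : ℝ | ∃ x : V → ℝ, (∀ v, 0 ≤ x v) ∧ (∑ v, x v ^ r) = 1 ∧
    y = r * ∑ K ∈ rCliques G r, ∏ i ∈ K, x i }


/-- `G` is `r`-clique connected: any two vertices are joined by a sequence of `r`-cliques
in which consecutive cliques share a vertex. -/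
def CliqueConnected {V : Type*} [DecidableEq V] (G : SimpleGraph V) (r : ℕ) : Prop :=
  ∀ u v : V, ∃ (m : ℕ) (K : Fin (m + 1) → Finset V),
    (∀ i, G.IsNClique r (K i)) ∧ u ∈ K 0 ∧ v ∈ K (Fin.last m) ∧
      ∀ i : Fin m, (K i.castSucc ∩ K i.succ).Nonempty

def Reach {V : Type*} [DecidableEq V] (G : SimpleGraph V) (r : ℕ) (u v : V) : Prop :=
  ∃ (m : ℕ) (K : Fin (m + 1) → Finset V),
    (∀ i, G.IsNClique r (K i)) ∧ u ∈ K 0 ∧ v ∈ K (Fin.last m) ∧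
      ∀ i : Fin m, (K i.castSucc ∩ K i.succ).Nonempty

variable {V : Type*} [DecidableEq V] {G : SimpleGraph V} {r : ℕ} {u v w : V}

lemma reach_single {K : Finset V} (hK : G.IsNClique r K) (hu : u ∈ K) (hv : v ∈ K) :
    Reach G r u v :=
  ⟨0, fun _ => K, fun _ => hK, hu, hv, fun i => i.elim0⟩

lemma reach_symm (h : Reach G r u v) : Reach G r v u := by
  obtain ⟨m, K, hK, hu, hv, hc⟩ := h
  refine ⟨m, fun i => K i.rev, fun i => hK _, ?_, ?_, ?_⟩
  · show v ∈ K (Fin.rev 0); rwa [Fin.rev_zero]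
  · show u ∈ K (Fin.last m).rev; rwa [Fin.rev_last]
  · intro i
    show (K i.castSucc.rev ∩ K i.succ.rev).Nonempty
    have := hc i.rev
    rw [Fin.rev_castSucc, Fin.rev_succ]
    rwa [Finset.inter_comm]

lemma reach_trans (h1 : Reach G r u v) (h2 : Reach G r v w) : Reach G r u w := by
  obtain ⟨m, K, hK, hu, hv, hc⟩ := h1
  obtain ⟨m', L, hL, hv', hw, hc'⟩ := h2
  set M : Fin (m + m' + 1 + 1) → Finset V := fun j =>
    if h : (j : ℕ) ≤ m then K ⟨j, by omega⟩
    else L ⟨(j : ℕ) - (m + 1), by have := j.isLt; omega⟩ with hM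
  have Mlow : ∀ (j : Fin (m + m' + 1 + 1)) (h : (j : ℕ) ≤ m),
      M j = K ⟨(j : ℕ), by omega⟩ := fun j h => dif_pos h
  have Mhigh : ∀ (j : Fin (m + m' + 1 + 1)) (h : ¬ (j : ℕ) ≤ m),
      M j = L ⟨(j : ℕ) - (m + 1), by have := j.isLt; omega⟩ := fun j h => dif_neg h
  refine ⟨m + m' + 1, M, ?_, ?_, ?_, ?_⟩
  · intro i
    by_cases h : (i : ℕ) ≤ m
    · rw [Mlow i h]; exact hK _
    · rw [Mhigh i h]; exact hL _
  · rw [Mlow 0 (by simp)]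
    have : (⟨((0 : Fin (m + m' + 1 + 1)) : ℕ), by simp⟩ : Fin (m + 1)) = 0 := by
      ext; simp
    rw [this]; exact hu
  · rw [Mhigh (Fin.last _) (by rw [Fin.val_last]; omega)]
    have : (⟨((Fin.last (m + m' + 1)) : ℕ) - (m + 1), by have := (Fin.last (m+m'+1)).isLt; omega⟩ : Fin (m' + 1)) = Fin.last m' := by
      ext; simp [Fin.last]
    rw [this]; exact hw
  · intro i
    have hi := i.isLt
    have hcs : ((i.castSucc : Fin (m + m' + 1 + 1)) : ℕ) = (i : ℕ) := rfl
    have hsu : ((i.succ : Fin (m + m' + 1 + 1)) : ℕ) = (i : ℕ) + 1 := rfl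
    rcases lt_trichotomy (i : ℕ) m with h | h | h
    · rw [Mlow i.castSucc (by omega), Mlow i.succ (by omega)]
      have := hc ⟨(i : ℕ), h⟩
      have e1 : (⟨((i.castSucc : Fin (m+m'+1+1)) : ℕ), by omega⟩ : Fin (m+1)) = (⟨(i:ℕ), h⟩ : Fin m).castSucc := by ext; simp [hcs]
      have e2 : (⟨((i.succ : Fin (m+m'+1+1)) : ℕ), by omega⟩ : Fin (m+1)) = (⟨(i:ℕ), h⟩ : Fin m).succ := by ext; simp [hsu]
      rw [e1, e2]; exact this
    · rw [Mlow i.castSucc (by omega), Mhigh i.succ (by omega)]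
      refine ⟨v, Finset.mem_inter.2 ⟨?_, ?_⟩⟩
      · have e1 : (⟨((i.castSucc : Fin (m+m'+1+1)) : ℕ), by omega⟩ : Fin (m+1)) = Fin.last m := by
          ext; simp [hcs, Fin.last, h]
        rw [e1]; exact hv
      · have e2 : (⟨((i.succ : Fin (m+m'+1+1)) : ℕ) - (m+1), by have := i.succ.isLt; omega⟩ : Fin (m'+1)) = 0 := by
          ext; simp [hsu]; omega
        rw [e2]; exact hv'
    · rw [Mhigh i.castSucc (by omega), Mhigh i.succ (by omega)]
      have hlt : (i : ℕ) - (m + 1) < m' := by omega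
      have := hc' ⟨(i : ℕ) - (m + 1), hlt⟩
      have e1 : (⟨((i.castSucc : Fin (m+m'+1+1)) : ℕ) - (m+1), by have := i.castSucc.isLt; omega⟩ : Fin (m'+1)) = (⟨(i:ℕ)-(m+1), hlt⟩ : Fin m').castSucc := by
        ext; simp [hcs]
      have e2 : (⟨((i.succ : Fin (m+m'+1+1)) : ℕ) - (m+1), by have := i.succ.isLt; omega⟩ : Fin (m'+1)) = (⟨(i:ℕ)-(m+1), hlt⟩ : Fin m').succ := by
        ext; simp [hsu]; omega
      rw [e1, e2]; exact this

section basics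

variable {V : Type*} [Fintype V] [DecidableEq V] (G : SimpleGraph V) (r : ℕ)

lemma mem_rCliques_iff {K : Finset V} : K ∈ rCliques G r ↔ G.IsNClique r K := by
  classical simp [rCliques]

/-- clique polynomial sum -/
noncomputable def cliqueSum (x : V → ℝ) : ℝ := ∑ K ∈ rCliques G r, ∏ i ∈ K, x i

noncomputable def specSet : Set ℝ :=
  { y : ℝ | ∃ x : V → ℝ, (∀ v, 0 ≤ x v) ∧ (∑ v, x v ^ r) = 1 ∧
    y = r * ∑ K ∈ rCliques G r, ∏ i ∈ K, x i }

lemma cliqueSpecRad_eq : cliqueSpecRad G r = sSup (specSet G r) := rfl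

variable {G} {r}

lemma cliqueSum_nonneg {x : V → ℝ} (hx : ∀ v, 0 ≤ x v) : 0 ≤ cliqueSum G r x :=
  Finset.sum_nonneg fun _ _ => Finset.prod_nonneg fun i _ => hx i

lemma mem_specSet {x : V → ℝ} (hx : ∀ v, 0 ≤ x v) (hsum : (∑ v, x v ^ r) = 1) :
    (r : ℝ) * cliqueSum G r x ∈ specSet G r :=
  ⟨x, hx, hsum, rfl⟩

lemma specSet_bddAbove (hr : 1 ≤ r) : BddAbove (specSet G r) := by
  refine ⟨r * (rCliques G r).card, ?_⟩
  rintro y ⟨x, hx, hsum, rfl⟩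
  have hle1 : ∀ v, x v ≤ 1 := by
    intro v
    have h1 : x v ^ r ≤ 1 := by
      rw [← hsum]
      exact Finset.single_le_sum (f := fun v => x v ^ r)
        (fun i _ => pow_nonneg (hx i) r) (mem_univ v)
    exact (pow_le_one_iff_of_nonneg (hx v) (by omega)).mp h1
  have hprod : ∀ K ∈ rCliques G r, ∏ i ∈ K, x i ≤ 1 := fun K _ =>
    Finset.prod_le_one (fun i _ => hx i) (fun i _ => hle1 i)
  have : ∑ K ∈ rCliques G r, ∏ i ∈ K, x i ≤ (rCliques G r).card := by
    calc ∑ K ∈ rCliques G r, ∏ i ∈ K, x i ≤ ∑ _K ∈ rCliques G r, (1:ℝ) :=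
          Finset.sum_le_sum hprod
      _ = (rCliques G r).card := by simp
  exact mul_le_mul_of_nonneg_left this (by positivity)

lemma specSet_nonempty (hr : 1 ≤ r) (v₀ : V) : (specSet G r (V := V)).Nonempty := by
  refine ⟨_, mem_specSet (x := fun v => if v = v₀ then 1 else 0) (fun v => by positivity) ?_⟩
  rw [Finset.sum_eq_single v₀]
  · simp
  · intro b _ hb; simp [hb]; omega
  · simp

lemma le_cliqueSpecRad (hr : 1 ≤ r) {x : V → ℝ} (hx : ∀ v, 0 ≤ x v)
    (hsum : (∑ v, x v ^ r) = 1) : (r : ℝ) * cliqueSum G r x ≤ cliqueSpecRad G r :=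
  le_csSup (specSet_bddAbove hr) (mem_specSet hx hsum)

/-- homogeneity: unnormalized bound -/
lemma scaled_le_cliqueSpecRad (hr : 1 ≤ r) [Nonempty V] {x : V → ℝ} (hx : ∀ v, 0 ≤ x v) :
    (r : ℝ) * cliqueSum G r x ≤ cliqueSpecRad G r * (∑ v, x v ^ r) := by
  set σ := ∑ v, x v ^ r with hσ
  have hσ0 : 0 ≤ σ := Finset.sum_nonneg fun i _ => pow_nonneg (hx i) r
  rcases eq_or_lt_of_le hσ0 with h0 | hpos
  · have hx0 : ∀ v, x v = 0 := by
      intro v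
      have : x v ^ r = 0 := by
        have h1 : ∀ i ∈ (univ : Finset V), 0 ≤ x i ^ r := fun i _ => pow_nonneg (hx i) r
        have := (Finset.sum_eq_zero_iff_of_nonneg h1).mp h0.symm v (mem_univ v)
        exact this
      exact pow_eq_zero_iff (by omega) |>.mp this
    have : cliqueSum G r x = 0 := by
      refine Finset.sum_eq_zero fun K hK => ?_
      have hKcard : K.card = r := ((mem_rCliques_iff G r).mp hK).2
      have hKne : K.Nonempty := Finset.card_pos.mp (by omega)
      exact Finset.prod_eq_zero hKne.choose_spec (hx0 _)
    rw [this, ← h0]; simp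
  · set lam := σ ^ ((r : ℝ)⁻¹) with hlam
    have hlampos : 0 < lam := Real.rpow_pos_of_pos hpos _
    have hlamr : lam ^ r = σ := by
      rw [← Real.rpow_natCast lam r, hlam, ← Real.rpow_mul hσ0]
      rw [inv_mul_cancel₀ (by exact_mod_cast (by omega : r ≠ 0)), Real.rpow_one]
    set y : V → ℝ := fun v => x v / lam with hy
    have hy0 : ∀ v, 0 ≤ y v := fun v => div_nonneg (hx v) hlampos.le
    have hysum : (∑ v, y v ^ r) = 1 := by
      simp only [hy, div_pow]
      rw [← Finset.sum_div, ← hσ, hlamr, div_self hpos.ne']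
    have hcs : cliqueSum G r y = cliqueSum G r x / σ := by
      unfold cliqueSum
      rw [Finset.sum_div]
      refine Finset.sum_congr rfl fun K hK => ?_
      have hKcard : K.card = r := ((mem_rCliques_iff G r).mp hK).2
      simp only [hy]
      rw [Finset.prod_div_distrib, Finset.prod_const, hKcard, hlamr]
    have := le_cliqueSpecRad (G := G) hr hy0 hysum
    rw [hcs] at this
    have h2 : (r : ℝ) * (cliqueSum G r x / σ) * σ ≤ cliqueSpecRad G r * σ :=
      mul_le_mul_of_nonneg_right this hσ0
    rw [mul_assoc, div_mul_cancel₀ _ hpos.ne'] at h2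
    exact h2

end basics

section attain

variable {V : Type*} [Fintype V] [DecidableEq V] {G : SimpleGraph V} {r : ℕ}

lemma exists_maximizer (hr : 1 ≤ r) [Nonempty V] (G : SimpleGraph V) :
    ∃ x : V → ℝ, (∀ v, 0 ≤ x v) ∧ (∑ v, x v ^ r) = 1 ∧
      (r : ℝ) * cliqueSum G r x = cliqueSpecRad G r := by
  set C : Set (V → ℝ) := {x | (∀ v, 0 ≤ x v) ∧ ∑ v, x v ^ r = 1} with hC
  have hclosed : IsClosed C := by
    have h1 : IsClosed {x : V → ℝ | ∀ v, 0 ≤ x v} := by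
      have : {x : V → ℝ | ∀ v, 0 ≤ x v} = ⋂ v, {x | 0 ≤ x v} := by ext; simp
      rw [this]
      exact isClosed_iInter fun v => isClosed_le continuous_const (continuous_apply v)
    have h2 : IsClosed {x : V → ℝ | ∑ v, x v ^ r = 1} :=
      isClosed_eq (continuous_finset_sum _ fun v _ => (continuous_apply v).pow r)
        continuous_const
    exact h1.inter h2
  have hsub : C ⊆ Set.univ.pi (fun _ : V => Set.Icc (0:ℝ) 1) := by
    rintro x ⟨hx, hsum⟩ v _
    refine ⟨hx v, ?_⟩
    have h1 : x v ^ r ≤ 1 := by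
      rw [← hsum]
      exact Finset.single_le_sum (f := fun v => x v ^ r)
        (fun i _ => pow_nonneg (hx i) r) (mem_univ v)
    exact (pow_le_one_iff_of_nonneg (hx v) (by omega)).mp h1
  have hcomp : IsCompact C :=
    (isCompact_univ_pi fun _ => isCompact_Icc).of_isClosed_subset hclosed hsub
  have hCne : C.Nonempty := by
    refine ⟨fun v => if v = Classical.arbitrary V then 1 else 0, fun v => by positivity, ?_⟩
    rw [Finset.sum_eq_single (Classical.arbitrary V)]
    · simp
    · intro b _ hb; simp [hb]; omega
    · simp
  have hcont : ContinuousOn (fun x : V → ℝ => (r : ℝ) * cliqueSum G r x) C := by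
    refine Continuous.continuousOn ?_
    exact continuous_const.mul (continuous_finset_sum _ fun K _ =>
      continuous_finset_prod _ fun i _ => continuous_apply i)
  obtain ⟨x₀, hx₀C, hmax⟩ := hcomp.exists_isMaxOn hCne hcont
  refine ⟨x₀, hx₀C.1, hx₀C.2, le_antisymm ?_ ?_⟩
  · exact le_cliqueSpecRad hr hx₀C.1 hx₀C.2
  · refine csSup_le (specSet_nonempty hr (Classical.arbitrary V)) ?_
    rintro y ⟨x, hx, hsum, rfl⟩
    exact hmax ⟨hx, hsum⟩

end attain

section lowerbound

variable {n r : ℕ}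

/-- auxiliary graph: a K_r on the first r vertices plus isolated vertices -/
def auxGraph (n r : ℕ) : SimpleGraph (Fin n) where
  Adj a b := a ≠ b ∧ a.val < r ∧ b.val < r
  symm := ⟨fun a b ⟨h1, h2, h3⟩ => ⟨h1.symm, h3, h2⟩⟩
  loopless := ⟨fun a ⟨h, _⟩ => h rfl⟩

lemma filter_lt_card (hn : r ≤ n) :
    ((univ : Finset (Fin n)).filter (fun a => a.val < r)).card = r := by
  have : (univ : Finset (Fin n)).filter (fun a => a.val < r)
      = (univ : Finset (Fin r)).map (Fin.castLEEmb hn) := by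
    ext a
    simp only [Finset.mem_filter, mem_univ, true_and, Finset.mem_map]
    constructor
    · intro ha
      refine ⟨⟨a.val, ha⟩, ?_⟩
      ext; simp [Fin.castLEEmb]
    · rintro ⟨b, -, rfl⟩
      simpa [Fin.castLEEmb] using b.isLt
  rw [this, Finset.card_map, Finset.card_univ, Fintype.card_fin]

lemma auxGraph_cliqueFree (hr : 2 ≤ r) (hn : r ≤ n) : (auxGraph n r).CliqueFree (r + 1) := by
  intro S hS
  have hsub : ∀ a ∈ S, a.val < r := by
    intro a ha
    obtain ⟨b, hb, hab⟩ : ∃ b ∈ S, b ≠ a := by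
      have h2 : 1 < S.card := by rw [hS.2]; omega
      exact Finset.exists_mem_ne h2 a
    exact (hS.1 hb ha hab).2.2
  have hcard : S.card ≤ r := by
    have : S ⊆ (univ : Finset (Fin n)).filter (fun a => a.val < r) :=
      fun a ha => Finset.mem_filter.2 ⟨mem_univ a, hsub a ha⟩
    calc S.card ≤ _ := Finset.card_le_card this
      _ ≤ r := le_of_eq (filter_lt_card hn)
  have hSc : S.card = r + 1 := hS.2
  omega

lemma one_le_auxGraph_rad (hr : 2 ≤ r) (hn : r ≤ n) :
    1 ≤ cliqueSpecRad (auxGraph n r) r := by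
  have hn0 : 0 < n := by omega
  have hrR : (0:ℝ) < r := by exact_mod_cast (by omega : 0 < r)
  set t : ℝ := ((r : ℝ)⁻¹) ^ ((r : ℝ)⁻¹) with ht
  have htpos : 0 < t := Real.rpow_pos_of_pos (by positivity) _
  have htr : t ^ r = (r : ℝ)⁻¹ := by
    rw [← Real.rpow_natCast t r, ht, ← Real.rpow_mul (by positivity),
      inv_mul_cancel₀ hrR.ne', Real.rpow_one]
  set x : Fin n → ℝ := fun v => if v.val < r then t else 0 with hx
  have hx0 : ∀ v, 0 ≤ x v := by intro v; rw [hx]; dsimp only; split <;> [exact htpos.le; rfl]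
  have hxsum : (∑ v, x v ^ r) = 1 := by
    rw [hx]
    calc (∑ v : Fin n, (if v.val < r then t else 0) ^ r)
        = ∑ v ∈ (univ : Finset (Fin n)).filter (fun a => a.val < r), t ^ r := by
          rw [Finset.sum_filter]
          refine Finset.sum_congr rfl fun v _ => ?_
          split
          · rfl
          · rw [zero_pow (by omega)]
      _ = r * t ^ r := by rw [Finset.sum_const, filter_lt_card hn]; simp
      _ = 1 := by rw [htr, mul_inv_cancel₀ hrR.ne']
  -- the clique consisting of the first r vertices
  set K0 : Finset (Fin n) := (univ : Finset (Fin n)).filter (fun a => a.val < r) with hK0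
  have hK0c : (auxGraph n r).IsNClique r K0 := by
    constructor
    · intro a ha b hb hab
      exact ⟨hab, (Finset.mem_filter.mp ha).2, (Finset.mem_filter.mp hb).2⟩
    · exact filter_lt_card hn
  have hK0mem : K0 ∈ rCliques (auxGraph n r) r := (mem_rCliques_iff _ _).mpr hK0c
  have hprod : ∏ i ∈ K0, x i = (r:ℝ)⁻¹ := by
    have : ∀ i ∈ K0, x i = t := by
      intro i hi; rw [hx]; exact if_pos (Finset.mem_filter.mp hi).2
    rw [Finset.prod_congr rfl this, Finset.prod_const, hK0c.2, htr]
  have hsumge : (r:ℝ)⁻¹ ≤ cliqueSum (auxGraph n r) r x := by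
    rw [← hprod]
    unfold cliqueSum
    exact Finset.single_le_sum (f := fun K => ∏ i ∈ K, x i)
      (fun K _ => Finset.prod_nonneg fun i _ => hx0 i) hK0mem
  have : (1:ℝ) ≤ (r:ℝ) * cliqueSum (auxGraph n r) r x := by
    calc (1:ℝ) = (r:ℝ) * (r:ℝ)⁻¹ := by rw [mul_inv_cancel₀ hrR.ne']
      _ ≤ _ := by exact mul_le_mul_of_nonneg_left hsumge hrR.le
  have hne : Nonempty (Fin n) := ⟨⟨0, hn0⟩⟩
  exact this.trans (le_cliqueSpecRad (by omega) hx0 hxsum)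

end lowerbound

set_option maxHeartbeats 2000000 in
theorem stmt_7 (r n : ℕ) (hr : 2 ≤ r) (hn : r ≤ n) (G' : SimpleGraph (Fin n))
    (hfree : G'.CliqueFree (r + 1))
    (hmax : ∀ H : SimpleGraph (Fin n), H.CliqueFree (r + 1) →
      cliqueSpecRad H r ≤ cliqueSpecRad G' r) :
    CliqueConnected G' r := by
  classical
  have hn0 : 0 < n := by omega
  have hne : Nonempty (Fin n) := ⟨⟨0, hn0⟩⟩
  have hr1 : 1 ≤ r := by omega
  have hrne : r ≠ 0 := by omega
  have hrR : (0:ℝ) < r := by exact_mod_cast (by omega : 0 < r)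
  set ρ := cliqueSpecRad G' r with hρ
  have hρ1 : 1 ≤ ρ := (one_le_auxGraph_rad hr hn).trans (hmax _ (auxGraph_cliqueFree hr hn))
  obtain ⟨x, hx0, hxsum, hxopt⟩ := exists_maximizer hr1 G'
  have hPpos : 0 < cliqueSum G' r x := by nlinarith
  obtain ⟨K0, hK0mem, hK0pos⟩ : ∃ K ∈ rCliques G' r, 0 < ∏ i ∈ K, x i := by
    by_contra h
    push_neg at h
    have : cliqueSum G' r x ≤ 0 :=
      Finset.sum_nonpos fun K hK => h K hK
    linarith
  have hK0cl : G'.IsNClique r K0 := (mem_rCliques_iff _ _).mp hK0mem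
  have hK0xpos : ∀ i ∈ K0, 0 < x i := by
    intro i hi
    rcases (hx0 i).lt_or_eq with h | h
    · exact h
    · exact absurd (Finset.prod_eq_zero hi h.symm) hK0pos.ne'
  obtain ⟨w0, hw0K0⟩ : K0.Nonempty := Finset.card_pos.mp (by rw [hK0cl.2]; omega)
  set A : Finset (Fin n) := univ.filter (fun v => Reach G' r w0 v) with hA
  have hAmem : ∀ v, v ∈ A ↔ Reach G' r w0 v := by
    intro v; simp [hA]
  have hK0A : ∀ z ∈ K0, z ∈ A := fun z hz =>
    (hAmem z).mpr (reach_single hK0cl hw0K0 hz)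
  have hext : ∀ K ∈ rCliques G' r, ∀ i ∈ K, i ∈ A → ∀ j ∈ K, j ∈ A := by
    intro K hK i hi hiA j hj
    exact (hAmem j).mpr (reach_trans ((hAmem i).mp hiA)
      (reach_single ((mem_rCliques_iff _ _).mp hK) hi hj))
  suffices hall : ∀ v, v ∈ A by
    intro u v
    exact reach_trans (reach_symm ((hAmem u).mp (hall u))) ((hAmem v).mp (hall v))
  by_contra hnall
  push_neg at hnall
  obtain ⟨u, hu⟩ := hnall
  have huK0 : u ∉ K0 := fun h => hu (hK0A u h)
  have huw0 : u ≠ w0 := fun h => hu (h ▸ hK0A w0 hw0K0)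
  -- restricted vector
  set z : Fin n → ℝ := fun v => if v ∈ A then x v else 0 with hz
  have hz0 : ∀ v, 0 ≤ z v := by
    intro v; rw [hz]; dsimp only; split
    · exact hx0 v
    · rfl
  have hzA : ∀ v ∈ A, z v = x v := fun v hv => if_pos hv
  have hznA : ∀ v, v ∉ A → z v = 0 := fun v hv => if_neg hv
  set s := ∑ v ∈ A, x v ^ r with hs
  have hzsum : (∑ v, z v ^ r) = s := by
    rw [hs]
    rw [show (∑ v, z v ^ r) = ∑ v, (if v ∈ A then x v ^ r else 0) from
      Finset.sum_congr rfl fun v _ => by rw [hz]; dsimp only; split <;> simp [zero_pow hrne]]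
    rw [Finset.sum_ite_mem, Finset.univ_inter]
  have hspos : 0 < s := by
    have hw0A : w0 ∈ A := hK0A w0 hw0K0
    have : x w0 ^ r ≤ s := Finset.single_le_sum (f := fun v => x v ^ r)
      (fun i _ => pow_nonneg (hx0 i) r) hw0A
    have := hK0xpos w0 hw0K0
    nlinarith [pow_pos (hK0xpos w0 hw0K0) r]
  have hsle1 : s ≤ 1 := by
    rw [hs, ← hxsum]
    exact Finset.sum_le_sum_of_subset_of_nonneg (Finset.subset_univ A)
      (fun i _ _ => pow_nonneg (hx0 i) r)
  -- clique splitting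
  set q : Finset (Fin n) → Prop := fun K => ∀ i ∈ K, i ∈ A with hq
  have hqdec : DecidablePred q := Classical.decPred _
  have hdisjA : ∀ K ∈ rCliques G' r, ¬ q K → ∀ i ∈ K, i ∉ A := by
    intro K hK hnq i hi hiA
    exact hnq (hext K hK i hi hiA)
  set PA := ∑ K ∈ (rCliques G' r).filter q, ∏ i ∈ K, x i with hPA
  set PB := ∑ K ∈ (rCliques G' r).filter (fun K => ¬ q K), ∏ i ∈ K, x i with hPB
  have hcliqueNe : ∀ K ∈ rCliques G' r, K.Nonempty := by
    intro K hK
    exact Finset.card_pos.mp (by rw [((mem_rCliques_iff _ _).mp hK).2]; omega)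
  have hzPA : cliqueSum G' r z = PA := by
    unfold cliqueSum
    rw [← Finset.sum_filter_add_sum_filter_not (rCliques G' r) q]
    rw [hPA]
    have h1 : ∀ K ∈ (rCliques G' r).filter q, ∏ i ∈ K, z i = ∏ i ∈ K, x i := by
      intro K hK
      exact Finset.prod_congr rfl fun i hi => hzA i ((Finset.mem_filter.mp hK).2 i hi)
    have h2 : ∀ K ∈ (rCliques G' r).filter (fun K => ¬ q K), ∏ i ∈ K, z i = 0 := by
      intro K hK
      obtain ⟨hKR, hnq⟩ := Finset.mem_filter.mp hK
      obtain ⟨i, hi⟩ := hcliqueNe K hKR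
      exact Finset.prod_eq_zero hi (hznA i (hdisjA K hKR hnq i hi))
    rw [Finset.sum_congr rfl h1, Finset.sum_congr rfl h2]
    simp
  have hxsplit : cliqueSum G' r x = PA + PB :=
    (Finset.sum_filter_add_sum_filter_not (rCliques G' r) q _).symm
  -- complementary vector
  set z' : Fin n → ℝ := fun v => if v ∈ A then 0 else x v with hz'
  have hz'0 : ∀ v, 0 ≤ z' v := by
    intro v; rw [hz']; dsimp only; split
    · rfl
    · exact hx0 v
  have hz'sum : (∑ v, z' v ^ r) = 1 - s := by
    have key : ∀ v, z' v ^ r = x v ^ r - z v ^ r := by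
      intro v; rw [hz, hz']; dsimp only; split <;> simp [zero_pow hrne]
    rw [Finset.sum_congr rfl fun v _ => key v, Finset.sum_sub_distrib, hxsum, hzsum]
  have hz'PB : cliqueSum G' r z' = PB := by
    unfold cliqueSum
    rw [← Finset.sum_filter_add_sum_filter_not (rCliques G' r) q]
    rw [hPB]
    have h1 : ∀ K ∈ (rCliques G' r).filter q, ∏ i ∈ K, z' i = 0 := by
      intro K hK
      obtain ⟨hKR, hq'⟩ := Finset.mem_filter.mp hK
      obtain ⟨i, hi⟩ := hcliqueNe K hKR
      exact Finset.prod_eq_zero hi (if_pos (hq' i hi))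
    have h2 : ∀ K ∈ (rCliques G' r).filter (fun K => ¬ q K), ∏ i ∈ K, z' i = ∏ i ∈ K, x i := by
      intro K hK
      obtain ⟨hKR, hnq⟩ := Finset.mem_filter.mp hK
      exact Finset.prod_congr rfl fun i hi => if_neg (hdisjA K hKR hnq i hi)
    rw [Finset.sum_congr rfl h1, Finset.sum_congr rfl h2]
    simp
  have hPAle : (r:ℝ) * PA ≤ ρ * s := by
    have := scaled_le_cliqueSpecRad (G := G') hr1 hz0
    rwa [hzPA, hzsum] at this
  have hPBle : (r:ℝ) * PB ≤ ρ * (1 - s) := by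
    have := scaled_le_cliqueSpecRad (G := G') hr1 hz'0
    rwa [hz'PB, hz'sum] at this
  have hPAeq : (r:ℝ) * PA = ρ * s := by
    have : (r:ℝ) * (PA + PB) = ρ := by rw [← hxsplit]; exact hxopt
    nlinarith
  -- the cloned graph: replace u's neighborhood by w0's
  set f : Fin n → Fin n := fun a => if a = u then w0 else a with hf
  have hfu : f u = w0 := if_pos rfl
  have hfother : ∀ a, a ≠ u → f a = a := fun a ha => if_neg ha
  set H : SimpleGraph (Fin n) :=
    { Adj := fun a b => a ≠ b ∧ G'.Adj (f a) (f b)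
      symm := ⟨fun a b h => ⟨h.1.symm, h.2.symm⟩⟩
      loopless := ⟨fun a h => h.1 rfl⟩ } with hH
  have hHadj : ∀ a b, H.Adj a b ↔ a ≠ b ∧ G'.Adj (f a) (f b) := fun a b => Iff.rfl
  have hHfree : H.CliqueFree (r + 1) := by
    intro S hS
    have hinj : Set.InjOn f S := by
      intro a ha b hb hab
      by_contra hne
      have hadj : H.Adj a b := hS.1 ha hb hne
      exact G'.irrefl (hab ▸ hadj.2)
    refine hfree (S.image f) ?_
    constructor
    · intro a' ha' b' hb' hne
      obtain ⟨a, ha, rfl⟩ := Finset.mem_image.mp ha'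
      obtain ⟨b, hb, rfl⟩ := Finset.mem_image.mp hb'
      have hab : a ≠ b := fun h => hne (by rw [h])
      exact ((hHadj a b).mp (hS.1 ha hb hab)).2
    · rw [Finset.card_image_of_injOn hinj, hS.2]
  -- the new weights
  set B : ℝ := (2:ℝ) ^ (-(r:ℝ)⁻¹) with hB
  have hBpos : 0 < B := Real.rpow_pos_of_pos two_pos _
  have hBr : B ^ r = (2:ℝ)⁻¹ := by
    rw [← Real.rpow_natCast B r, hB, ← Real.rpow_mul (by norm_num : (0:ℝ) ≤ 2),
      show -(r:ℝ)⁻¹ * r = -1 by field_simp]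
    rw [Real.rpow_neg_one]
  have hzw0 : 0 < z w0 := by rw [hzA w0 (hK0A w0 hw0K0)]; exact hK0xpos w0 hw0K0
  set t : ℝ := z w0 * B with htdef
  have htpos : 0 < t := mul_pos hzw0 hBpos
  have htr : t ^ r + t ^ r = z w0 ^ r := by
    rw [htdef, mul_pow, hBr]; ring
  have h2t : z w0 < 2 * t := by
    have h21 : (1:ℝ) < 2 * B := by
      have hrinv : (r:ℝ)⁻¹ < 1 := by
        rw [inv_lt_one_iff₀]
        right; exact_mod_cast (by omega : 1 < r)
      have heq : (2:ℝ) * B = 2 ^ (1 - (r:ℝ)⁻¹) := by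
        rw [hB, Real.rpow_sub two_pos, Real.rpow_one, Real.rpow_neg (by norm_num : (0:ℝ) ≤ 2),
          div_eq_mul_inv]
      rw [heq]
      exact (Real.one_lt_rpow_iff_of_pos two_pos).mpr (Or.inl ⟨by norm_num, by linarith⟩)
    nlinarith
  set y : Fin n → ℝ := fun v => if v = u then t else if v = w0 then t else z v with hy
  have hyu : y u = t := if_pos rfl
  have hyw0 : y w0 = t := by
    rw [hy]; dsimp only; rw [if_neg (Ne.symm huw0), if_pos rfl]
  have hyother : ∀ v, v ≠ u → v ≠ w0 → y v = z v := by
    intro v h1 h2; rw [hy]; dsimp only; rw [if_neg h1, if_neg h2]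
  have hy0 : ∀ v, 0 ≤ y v := by
    intro v; rw [hy]; dsimp only
    split
    · exact htpos.le
    · split
      · exact htpos.le
      · exact hz0 v
  have hw0eu : w0 ∈ univ.erase u := Finset.mem_erase.2 ⟨Ne.symm huw0, mem_univ _⟩
  have hysum : (∑ v, y v ^ r) = s := by
    have hz1 : ∑ v ∈ univ.erase u, z v ^ r + z u ^ r = ∑ v, z v ^ r :=
      Finset.sum_erase_add _ _ (mem_univ u)
    have hz2 : ∑ v ∈ (univ.erase u).erase w0, z v ^ r + z w0 ^ r
        = ∑ v ∈ univ.erase u, z v ^ r := Finset.sum_erase_add _ _ hw0eu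
    have hy1 : ∑ v ∈ univ.erase u, y v ^ r + y u ^ r = ∑ v, y v ^ r :=
      Finset.sum_erase_add _ _ (mem_univ u)
    have hy2 : ∑ v ∈ (univ.erase u).erase w0, y v ^ r + y w0 ^ r
        = ∑ v ∈ univ.erase u, y v ^ r := Finset.sum_erase_add _ _ hw0eu
    have heq : ∑ v ∈ (univ.erase u).erase w0, y v ^ r
        = ∑ v ∈ (univ.erase u).erase w0, z v ^ r := by
      refine Finset.sum_congr rfl fun v hv => ?_
      obtain ⟨hvw0, hvu'⟩ := Finset.mem_erase.mp hv
      obtain ⟨hvu, -⟩ := Finset.mem_erase.mp hvu'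
      rw [hyother v hvu hvw0]
    have hzu : z u = 0 := hznA u hu
    have hzur : z u ^ r = 0 := by rw [hzu, zero_pow hrne]
    rw [← hzsum]
    rw [hyu, hyw0] at *
    linarith
  -- clique families
  set Q1 := (rCliques G' r).filter (fun K => u ∉ K ∧ w0 ∉ K) with hQ1
  set Q2 := (rCliques G' r).filter (fun K => u ∉ K ∧ w0 ∈ K) with hQ2
  have split3 : ∀ g : Finset (Fin n) → ℝ,
      ∑ K ∈ rCliques G' r, g K
        = ∑ K ∈ Q1, g K + ∑ K ∈ Q2, g K
          + ∑ K ∈ (rCliques G' r).filter (fun K => u ∈ K), g K := by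
    intro g
    rw [← Finset.sum_filter_add_sum_filter_not (rCliques G' r) (fun K => u ∉ K) g]
    have e1 : (rCliques G' r).filter (fun K => ¬ u ∉ K)
        = (rCliques G' r).filter (fun K => u ∈ K) :=
      Finset.filter_congr fun K _ => by simp
    rw [e1]
    congr 1
    rw [← Finset.sum_filter_add_sum_filter_not ((rCliques G' r).filter (fun K => u ∉ K))
      (fun K => w0 ∉ K) g, Finset.filter_filter, Finset.filter_filter]
    have e2 : (rCliques G' r).filter (fun K => u ∉ K ∧ ¬ w0 ∉ K) = Q2 :=
      Finset.filter_congr fun K _ => by simp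
    rw [e2, hQ1]
  set c := ∑ K ∈ Q2, ∏ i ∈ K.erase w0, z i with hc
  have hzc : cliqueSum G' r z = ∑ K ∈ Q1, ∏ i ∈ K, z i + z w0 * c := by
    unfold cliqueSum
    rw [split3 (fun K => ∏ i ∈ K, z i)]
    have h3 : ∑ K ∈ (rCliques G' r).filter (fun K => u ∈ K), ∏ i ∈ K, z i = 0 := by
      refine Finset.sum_eq_zero fun K hK => ?_
      exact Finset.prod_eq_zero (Finset.mem_filter.mp hK).2 (hznA u hu)
    have h2 : ∑ K ∈ Q2, ∏ i ∈ K, z i = z w0 * c := by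
      rw [hc, Finset.mul_sum]
      refine Finset.sum_congr rfl fun K hK => ?_
      exact (Finset.mul_prod_erase K z (Finset.mem_filter.mp hK).2.2).symm
    rw [h3, h2]; ring
  have hK0Q2 : K0 ∈ Q2 := Finset.mem_filter.2 ⟨hK0mem, huK0, hw0K0⟩
  have hcpos : 0 < c := by
    have hterm : 0 < ∏ i ∈ K0.erase w0, z i := by
      refine Finset.prod_pos fun i hi => ?_
      have hiK0 : i ∈ K0 := Finset.mem_of_mem_erase hi
      rw [hzA i (hK0A i hiK0)]
      exact hK0xpos i hiK0
    have : ∏ i ∈ K0.erase w0, z i ≤ c := by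
      rw [hc]
      exact Finset.single_le_sum (f := fun K => ∏ i ∈ K.erase w0, z i)
        (fun K _ => Finset.prod_nonneg fun i _ => hz0 i) hK0Q2
    linarith
  -- membership of the families in the cliques of H
  have hQ1H : ∀ K ∈ rCliques G' r, u ∉ K → K ∈ rCliques H r := by
    intro K hK huK
    rw [mem_rCliques_iff]
    have hKcl := (mem_rCliques_iff G' r).mp hK
    constructor
    · intro a ha b hb hab
      refine (hHadj a b).mpr ⟨hab, ?_⟩
      rw [hfother a (fun h => huK (h ▸ ha)), hfother b (fun h => huK (h ▸ hb))]
      exact hKcl.1 ha hb hab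
    · exact hKcl.2
  have hφH : ∀ K ∈ Q2, insert u (K.erase w0) ∈ rCliques H r := by
    intro K hK
    obtain ⟨hKR, huK, hw0K⟩ := Finset.mem_filter.mp hK
    have hKcl := (mem_rCliques_iff G' r).mp hKR
    have hue : u ∉ K.erase w0 := fun h => huK (Finset.mem_of_mem_erase h)
    rw [mem_rCliques_iff]
    constructor
    · intro a ha b hb hab
      refine (hHadj a b).mpr ⟨hab, ?_⟩
      rcases Finset.mem_insert.mp ha with rfl | ha'
      · rcases Finset.mem_insert.mp hb with rfl | hb'
        · exact absurd rfl hab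
        · rw [hfu, hfother b (fun h => hue (h ▸ hb'))]
          exact hKcl.1 hw0K (Finset.mem_of_mem_erase hb')
            (Ne.symm (Finset.ne_of_mem_erase hb'))
      · rcases Finset.mem_insert.mp hb with rfl | hb'
        · rw [hfu, hfother a (fun h => hue (h ▸ ha'))]
          exact (hKcl.1 hw0K (Finset.mem_of_mem_erase ha')
            (Ne.symm (Finset.ne_of_mem_erase ha'))).symm
        · rw [hfother a (fun h => hue (h ▸ ha')), hfother b (fun h => hue (h ▸ hb'))]
          exact hKcl.1 (Finset.mem_of_mem_erase ha') (Finset.mem_of_mem_erase hb') hab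
    · rw [Finset.card_insert_of_notMem hue, Finset.card_erase_of_mem hw0K, hKcl.2]
      omega
  -- the three disjoint families inside the cliques of H
  set Q2' := Q2.image (fun K => insert u (K.erase w0)) with hQ2'
  have hinjφ : Set.InjOn (fun K : Finset (Fin n) => insert u (K.erase w0)) (Q2 : Set (Finset (Fin n))) := by
    intro K1 hK1 K2 hK2 h12
    obtain ⟨-, hu1, hw1⟩ := Finset.mem_filter.mp hK1
    obtain ⟨-, hu2, hw2⟩ := Finset.mem_filter.mp hK2
    have e1 : (insert u (K1.erase w0)).erase u = K1.erase w0 :=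
      Finset.erase_insert (fun h => hu1 (Finset.mem_of_mem_erase h))
    have e2 : (insert u (K2.erase w0)).erase u = K2.erase w0 :=
      Finset.erase_insert (fun h => hu2 (Finset.mem_of_mem_erase h))
    have h12' : insert u (K1.erase w0) = insert u (K2.erase w0) := h12
    have : K1.erase w0 = K2.erase w0 := by rw [← e1, ← e2, h12']
    have := congrArg (insert w0) this
    rwa [Finset.insert_erase hw1, Finset.insert_erase hw2] at this
  have hdisj12 : Disjoint Q1 Q2 := by
    rw [Finset.disjoint_left]
    intro K h1 h2
    exact (Finset.mem_filter.mp h1).2.2 (Finset.mem_filter.mp h2).2.2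
  have hdisj2' : Disjoint (Q1 ∪ Q2) Q2' := by
    rw [Finset.disjoint_left]
    intro K h1 h2
    obtain ⟨K', -, rfl⟩ := Finset.mem_image.mp h2
    have huK : u ∈ insert u (K'.erase w0) := Finset.mem_insert_self _ _
    rcases Finset.mem_union.mp h1 with h | h
    · exact (Finset.mem_filter.mp h).2.1 huK
    · exact (Finset.mem_filter.mp h).2.1 huK
  have hsubH : Q1 ∪ Q2 ∪ Q2' ⊆ rCliques H r := by
    intro K hK
    rcases Finset.mem_union.mp hK with h | h
    · rcases Finset.mem_union.mp h with h' | h'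
      · exact hQ1H K (Finset.mem_filter.mp h').1 (Finset.mem_filter.mp h').2.1
      · exact hQ1H K (Finset.mem_filter.mp h').1 (Finset.mem_filter.mp h').2.1
    · obtain ⟨K', hK', rfl⟩ := Finset.mem_image.mp h
      exact hφH K' hK'
  -- compare the values
  have hprodQ1 : ∀ K ∈ Q1, ∏ i ∈ K, y i = ∏ i ∈ K, z i := by
    intro K hK
    obtain ⟨-, huK, hw0K⟩ := Finset.mem_filter.mp hK
    exact Finset.prod_congr rfl fun i hi =>
      hyother i (fun h => huK (h ▸ hi)) (fun h => hw0K (h ▸ hi))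
  have hprodErase : ∀ K ∈ Q2, ∏ i ∈ K.erase w0, y i = ∏ i ∈ K.erase w0, z i := by
    intro K hK
    obtain ⟨-, huK, -⟩ := Finset.mem_filter.mp hK
    refine Finset.prod_congr rfl fun i hi => ?_
    exact hyother i (fun h => huK (h ▸ Finset.mem_of_mem_erase hi))
      (Finset.ne_of_mem_erase hi)
  have hprodQ2 : ∀ K ∈ Q2, ∏ i ∈ K, y i = t * ∏ i ∈ K.erase w0, z i := by
    intro K hK
    rw [← hprodErase K hK, ← hyw0]
    exact (Finset.mul_prod_erase K y (Finset.mem_filter.mp hK).2.2).symm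
  have hprodQ2' : ∀ K ∈ Q2, ∏ i ∈ insert u (K.erase w0), y i = t * ∏ i ∈ K.erase w0, z i := by
    intro K hK
    obtain ⟨-, huK, -⟩ := Finset.mem_filter.mp hK
    rw [Finset.prod_insert (fun h => huK (Finset.mem_of_mem_erase h)), hyu,
      hprodErase K hK]
  have hHge : ∑ K ∈ Q1, ∏ i ∈ K, z i + 2 * t * c ≤ cliqueSum H r y := by
    have hsum3 : ∑ K ∈ Q1 ∪ Q2 ∪ Q2', ∏ i ∈ K, y i
        = ∑ K ∈ Q1, ∏ i ∈ K, y i + ∑ K ∈ Q2, ∏ i ∈ K, y i + ∑ K ∈ Q2', ∏ i ∈ K, y i := by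
      rw [Finset.sum_union hdisj2', Finset.sum_union hdisj12]
    have hQ2'sum : ∑ K ∈ Q2', ∏ i ∈ K, y i = t * c := by
      rw [hQ2', Finset.sum_image (fun K hK K' hK' h => hinjφ hK hK' h), hc, Finset.mul_sum]
      exact Finset.sum_congr rfl hprodQ2'
    have hQ2sum : ∑ K ∈ Q2, ∏ i ∈ K, y i = t * c := by
      rw [hc, Finset.mul_sum]
      exact Finset.sum_congr rfl hprodQ2
    have hle : ∑ K ∈ Q1 ∪ Q2 ∪ Q2', ∏ i ∈ K, y i ≤ cliqueSum H r y := by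
      unfold cliqueSum
      exact Finset.sum_le_sum_of_subset_of_nonneg hsubH
        (fun K _ _ => Finset.prod_nonneg fun i _ => hy0 i)
    rw [hsum3, hQ2'sum, hQ2sum, Finset.sum_congr rfl hprodQ1] at hle
    linarith
  -- final contradiction
  have hstrict : cliqueSum G' r z < cliqueSum H r y := by
    rw [hzc]
    nlinarith
  have hHval : (r:ℝ) * cliqueSum H r y ≤ ρ * s := by
    calc (r:ℝ) * cliqueSum H r y ≤ cliqueSpecRad H r * (∑ v, y v ^ r) :=
          scaled_le_cliqueSpecRad hr1 hy0
      _ = cliqueSpecRad H r * s := by rw [hysum]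
      _ ≤ ρ * s := mul_le_mul_of_nonneg_right (hmax H hHfree) hspos.le
  have hzval : (r:ℝ) * cliqueSum G' r z = ρ * s := by rw [hzPA]; exact hPAeq
  nlinarith
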